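/- Let φ : [a,b] → ℝ be C² with |φ''(z)| ≥ t > 0 for all z ∈ [a,b], and let ψ : [a,b] → ℂ be C¹. Then |∫_a^b e^{iφ(z)} ψ(z) dz| ≤ C·t^{−1/2}·(|ψ(b)| + ∫_a^b |ψ'(z)| dz) for an absolute constant C. -/

import Mathlib

open Set MeasureTheory intervalIntegral Complex

noncomputable section VdC

private lemma ofReal_hdwa {f : ℝ → ℝ} {f' : ℝ} {s : Set ℝ} {x : ℝ}
    (h : HasDerivWithinAt f f' s x) :
    HasDerivWithinAt (fun y => (f y : ℂ)) (f' : ℂ) s x := by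
  exact h.ofReal_comp

private lemma exp_hdwa {φ g : ℝ → ℝ} {s : Set ℝ} {x : ℝ}
    (h : HasDerivWithinAt φ (g x) s x) :
    HasDerivWithinAt (fun y => Complex.exp (Complex.I * φ y))
      (Complex.I * g x * Complex.exp (Complex.I * φ x)) s x := by
  have := ((ofReal_hdwa h).const_mul Complex.I).cexp
  convert this using 1; ring

private lemma norm_expI (r : ℝ) : ‖Complex.exp (Complex.I * r)‖ = 1 := by
  rw [Complex.norm_exp]
  simp [Complex.mul_re]

/-- First-derivative estimate via integration by parts (base form). -/
private lemma vdc1base {a b : ℝ} {φ g g' : ℝ → ℝ}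
    (hab : a ≤ b)
    (hφ : ∀ x ∈ Icc a b, HasDerivWithinAt φ (g x) (Icc a b) x)
    (hg : ∀ x ∈ Icc a b, HasDerivWithinAt g (g' x) (Icc a b) x)
    (hg'c : ContinuousOn g' (Icc a b))
    (hg'0 : ∀ x ∈ Icc a b, 0 ≤ g' x)
    (hne : ∀ x ∈ Icc a b, g x ≠ 0) :
    ‖∫ z in a..b, Complex.exp (Complex.I * φ z)‖ ≤
      1 / |g b| + 1 / |g a| + (1 / g a - 1 / g b) := by
  have ha : a ∈ Icc a b := left_mem_Icc.2 hab
  have hb : b ∈ Icc a b := right_mem_Icc.2 hab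
  have gcont : ContinuousOn g (Icc a b) := fun x hx => (hg x hx).continuousWithinAt
  have φcont : ContinuousOn φ (Icc a b) := fun x hx => (hφ x hx).continuousWithinAt
  set E : ℝ → ℂ := fun x => Complex.exp (Complex.I * φ x) with hE
  have Econt : ContinuousOn E (Icc a b) :=
    Complex.continuous_exp.comp_continuousOn
      ((continuous_const.continuousOn).mul (Complex.continuous_ofReal.comp_continuousOn φcont))
  -- the antiderivative candidate
  set h : ℝ → ℂ := fun x => E x * (Complex.I * g x)⁻¹ with hh
  have hIg : ∀ x ∈ Icc a b, (Complex.I * g x) ≠ 0 := by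
    intro x hx
    simp [Complex.ext_iff, hne x hx]
  have hder : ∀ x ∈ Icc a b,
      HasDerivWithinAt h (E x + E x * (Complex.I * g' x / (g x : ℂ) ^ 2)) (Icc a b) x := by
    intro x hx
    have h1 : HasDerivWithinAt E (Complex.I * g x * E x) (Icc a b) x := exp_hdwa (hφ x hx)
    have hmul : HasDerivWithinAt (fun y => Complex.I * (g y : ℂ))
        (Complex.I * (g' x : ℂ)) (Icc a b) x := (ofReal_hdwa (hg x hx)).const_mul Complex.I
    have h2 : HasDerivWithinAt (fun y => (Complex.I * (g y : ℂ))⁻¹)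
        (-((Complex.I * (g x : ℂ)) ^ 2)⁻¹ * (Complex.I * (g' x : ℂ))) (Icc a b) x :=
      (hasDerivAt_inv (hIg x hx)).comp_hasDerivWithinAt x hmul
    have hgx : (g x : ℂ) ≠ 0 := by exact_mod_cast hne x hx
    have key : Complex.I * (g x : ℂ) * E x * (Complex.I * (g x : ℂ))⁻¹ = E x := by
      rw [mul_comm (Complex.I * (g x : ℂ)) (E x), mul_assoc, mul_inv_cancel₀ (hIg x hx), mul_one]
    have key2 : -((Complex.I * (g x : ℂ)) ^ 2)⁻¹ * (Complex.I * (g' x : ℂ))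
        = Complex.I * (g' x : ℂ) / (g x : ℂ) ^ 2 := by
      rw [mul_pow, Complex.I_sq]
      field_simp
    have := h1.mul h2
    rw [key, key2] at this
    exact this
  have hcont : ContinuousOn h (Icc a b) :=
    Econt.mul (((continuous_const.continuousOn).mul
      (Complex.continuous_ofReal.comp_continuousOn gcont)).inv₀ hIg)
  have hint1 : IntervalIntegrable E volume a b :=
    (Econt.mono (by rw [uIcc_of_le hab])).intervalIntegrable
  have hcont2 : ContinuousOn (fun x => E x * (Complex.I * g' x / (g x : ℂ) ^ 2)) (Icc a b) := by
    apply Econt.mul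
    apply ContinuousOn.div
    · exact (continuous_const.continuousOn).mul
        (Complex.continuous_ofReal.comp_continuousOn hg'c)
    · exact ((Complex.continuous_ofReal.comp_continuousOn gcont).pow 2)
    · intro x hx
      have : (g x : ℂ) ≠ 0 := by exact_mod_cast hne x hx
      simpa using pow_ne_zero 2 this
  have hint2 : IntervalIntegrable (fun x => E x * (Complex.I * g' x / (g x : ℂ) ^ 2)) volume a b :=
    (hcont2.mono (by rw [uIcc_of_le hab])).intervalIntegrable
  -- FTC for h
  have ftc : ∫ x in a..b, (E x + E x * (Complex.I * g' x / (g x : ℂ) ^ 2)) = h b - h a := by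
    apply integral_eq_sub_of_hasDeriv_right_of_le hab hcont
    · intro x hx
      exact ((hder x (Ioo_subset_Icc_self hx)).hasDerivAt
        (Icc_mem_nhds hx.1 hx.2)).hasDerivWithinAt
    · exact hint1.add hint2
  have split : ∫ x in a..b, E x
      = h b - h a - ∫ x in a..b, E x * (Complex.I * g' x / (g x : ℂ) ^ 2) := by
    rw [← ftc, integral_add hint1 hint2]; ring
  -- FTC for -1/g
  have ftc2 : ∫ x in a..b, g' x / (g x) ^ 2 = (1 / g a - 1 / g b) := by
    have : ∫ x in a..b, g' x / (g x) ^ 2 = (fun x => -(g x)⁻¹) b - (fun x => -(g x)⁻¹) a := by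
      apply integral_eq_sub_of_hasDeriv_right_of_le hab
      · exact (gcont.inv₀ hne).neg
      · intro x hx
        have H : HasDerivWithinAt (fun x => -(g x)⁻¹) (g' x / g x ^ 2) (Ioi x) x := by
          have := (((hg x (Ioo_subset_Icc_self hx)).inv
            (hne x (Ioo_subset_Icc_self hx))).neg.hasDerivAt
            (Icc_mem_nhds hx.1 hx.2)).hasDerivWithinAt (s := Ioi x)
          rw [show g' x / g x ^ 2 = -(-g' x / g x ^ 2) by ring]
          exact this
        exact H
      · apply ContinuousOn.intervalIntegrable
        rw [uIcc_of_le hab]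
        exact hg'c.div (gcont.pow 2) (fun x hx => pow_ne_zero 2 (hne x hx))
    rw [this]
    simp only [one_div]
    ring
  -- norms
  have hnorm : ∀ x ∈ Icc a b, ‖h x‖ = 1 / |g x| := by
    intro x hx
    have e1 : ‖E x‖ = 1 := norm_expI (φ x)
    have e2 : ‖(Complex.I * (g x : ℂ))⁻¹‖ = 1 / |g x| := by
      rw [norm_inv, norm_mul, Complex.norm_I, Complex.norm_real, Real.norm_eq_abs, one_mul,
        one_div]
    show ‖E x * (Complex.I * (g x : ℂ))⁻¹‖ = 1 / |g x|
    rw [norm_mul, e1, e2, one_mul]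
  calc ‖∫ x in a..b, E x‖
      ≤ ‖h b‖ + ‖h a‖ + ‖∫ x in a..b, E x * (Complex.I * g' x / (g x : ℂ) ^ 2)‖ := by
        rw [split]
        refine (norm_sub_le _ _).trans ?_
        gcongr
        exact norm_sub_le _ _
    _ ≤ 1 / |g b| + 1 / |g a| + (1 / g a - 1 / g b) := by
        rw [hnorm a ha, hnorm b hb]
        gcongr
        have : ‖∫ x in a..b, E x * (Complex.I * g' x / (g x : ℂ) ^ 2)‖
            ≤ ∫ x in a..b, ‖E x * (Complex.I * g' x / (g x : ℂ) ^ 2)‖ :=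
          norm_integral_le_integral_norm hab
        refine this.trans ?_
        rw [← ftc2]
        apply le_of_eq
        apply integral_congr
        intro x hx
        rw [uIcc_of_le hab] at hx
        simp only [norm_mul]
        rw [hE, norm_expI, one_mul, norm_div, norm_mul]
        simp only [Complex.norm_I, Complex.norm_real, Real.norm_eq_abs, one_mul]
        rw [_root_.abs_of_nonneg (hg'0 x hx), norm_pow, Complex.norm_real, Real.norm_eq_abs, _root_.sq_abs]

private lemma vdc1pos {a b lam : ℝ} {φ g g' : ℝ → ℝ}
    (hab : a ≤ b) (hlam : 0 < lam)
    (hφ : ∀ x ∈ Icc a b, HasDerivWithinAt φ (g x) (Icc a b) x)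
    (hg : ∀ x ∈ Icc a b, HasDerivWithinAt g (g' x) (Icc a b) x)
    (hg'c : ContinuousOn g' (Icc a b))
    (hg'0 : ∀ x ∈ Icc a b, 0 ≤ g' x)
    (hglam : ∀ x ∈ Icc a b, lam ≤ g x) :
    ‖∫ z in a..b, Complex.exp (Complex.I * φ z)‖ ≤ 2 / lam := by
  have hne : ∀ x ∈ Icc a b, g x ≠ 0 := fun x hx => (hlam.trans_le (hglam x hx)).ne'
  refine (vdc1base hab hφ hg hg'c hg'0 hne).trans ?_
  have hga : lam ≤ g a := hglam a (left_mem_Icc.2 hab)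
  have hgb : lam ≤ g b := hglam b (right_mem_Icc.2 hab)
  rw [abs_of_pos (hlam.trans_le hga), abs_of_pos (hlam.trans_le hgb)]
  have h1 : 1 / g a ≤ 1 / lam := one_div_le_one_div_of_le hlam hga
  have h2 : (2 : ℝ) / lam = 2 * (1 / lam) := by ring
  linarith

private lemma vdc1neg {a b lam : ℝ} {φ g g' : ℝ → ℝ}
    (hab : a ≤ b) (hlam : 0 < lam)
    (hφ : ∀ x ∈ Icc a b, HasDerivWithinAt φ (g x) (Icc a b) x)
    (hg : ∀ x ∈ Icc a b, HasDerivWithinAt g (g' x) (Icc a b) x)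
    (hg'c : ContinuousOn g' (Icc a b))
    (hg'0 : ∀ x ∈ Icc a b, 0 ≤ g' x)
    (hglam : ∀ x ∈ Icc a b, g x ≤ -lam) :
    ‖∫ z in a..b, Complex.exp (Complex.I * φ z)‖ ≤ 2 / lam := by
  have hneg : ∀ x ∈ Icc a b, g x < 0 := fun x hx => (hglam x hx).trans_lt (by linarith)
  have hne : ∀ x ∈ Icc a b, g x ≠ 0 := fun x hx => (hneg x hx).ne
  refine (vdc1base hab hφ hg hg'c hg'0 hne).trans ?_
  have hga : g a ≤ -lam := hglam a (left_mem_Icc.2 hab)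
  have hgb : g b ≤ -lam := hglam b (right_mem_Icc.2 hab)
  rw [abs_of_neg (hneg a (left_mem_Icc.2 hab)), abs_of_neg (hneg b (right_mem_Icc.2 hab))]
  have h1 : 1 / (-g b) ≤ 1 / lam := one_div_le_one_div_of_le hlam (by linarith)
  have e1 : (1 : ℝ) / (-g b) = -(1 / g b) := by
    rw [one_div, one_div, inv_neg]
  have h2 : (2 : ℝ) / lam = 2 * (1 / lam) := by ring
  linarith

/-- Second-derivative van der Corput, positive second derivative. -/
private lemma vdc2pos {a b t : ℝ} {φ g g' : ℝ → ℝ}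
    (hab : a ≤ b) (ht : 0 < t)
    (hφ : ∀ x ∈ Icc a b, HasDerivWithinAt φ (g x) (Icc a b) x)
    (hg : ∀ x ∈ Icc a b, HasDerivWithinAt g (g' x) (Icc a b) x)
    (hg'c : ContinuousOn g' (Icc a b))
    (hg't : ∀ x ∈ Icc a b, t ≤ g' x) :
    ‖∫ z in a..b, Complex.exp (Complex.I * φ z)‖ ≤ 6 * t ^ (-(1 / 2) : ℝ) := by
  set δ := Real.sqrt t with hδdef
  have hδ : 0 < δ := Real.sqrt_pos.2 ht
  have hδδ : δ * δ = t := Real.mul_self_sqrt ht.le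
  have hrq : t ^ (-(1 / 2) : ℝ) = 1 / δ := by
    rw [Real.rpow_neg ht.le, one_div, hδdef, Real.sqrt_eq_rpow]
    norm_num
  rw [hrq]
  have gcont : ContinuousOn g (Icc a b) := fun x hx => (hg x hx).continuousWithinAt
  have φcont : ContinuousOn φ (Icc a b) := fun x hx => (hφ x hx).continuousWithinAt
  set E : ℝ → ℂ := fun x => Complex.exp (Complex.I * φ x) with hE
  have Econt : ContinuousOn E (Icc a b) :=
    Complex.continuous_exp.comp_continuousOn
      ((continuous_const.continuousOn).mul (Complex.continuous_ofReal.comp_continuousOn φcont))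
  have Eint : ∀ c ∈ Icc a b, ∀ d ∈ Icc a b, IntervalIntegrable E volume c d :=
    fun c hc d hd => (Econt.mono (uIcc_subset_Icc hc hd)).intervalIntegrable
  -- monotonicity of g
  have hmono : MonotoneOn g (Icc a b) := by
    apply monotoneOn_of_hasDerivWithinAt_nonneg (convex_Icc a b) gcont
    · exact fun x hx => ((hg x (interior_subset hx)).mono interior_subset)
    · exact fun x hx => (ht.trans_le (hg't x (interior_subset hx))).le
  -- growth of g
  have hgrow : ∀ c ∈ Icc a b, ∀ d ∈ Icc a b, c ≤ d → t * (d - c) ≤ g d - g c := by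
    intro c hc d hd hcd
    have hm : MonotoneOn (fun y => g y - t * y) (Icc a b) := by
      apply monotoneOn_of_hasDerivWithinAt_nonneg (convex_Icc a b)
        (gcont.sub ((continuous_const.mul continuous_id).continuousOn))
        (f' := fun x => g' x - t)
      · intro x hx
        exact ((hg x (interior_subset hx)).mono interior_subset).sub
          (by convert ((hasDerivAt_id x).const_mul t).hasDerivWithinAt using 1 <;> simp [Pi.mul_def])
      · exact fun x hx => by linarith [hg't x (interior_subset hx)]
    have := hm hc hd hcd
    simp only at this
    linarith
  have hsub : ∀ c ∈ Icc a b, ∀ d ∈ Icc a b, Icc c d ⊆ Icc a b :=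
    fun c hc d hd => Icc_subset_Icc hc.1 hd.2
  -- sub-interval versions of vdc1
  have vpos : ∀ c ∈ Icc a b, ∀ d ∈ Icc a b, c ≤ d → (∀ x ∈ Icc c d, δ ≤ g x) →
      ‖∫ z in c..d, E z‖ ≤ 2 / δ := by
    intro c hc d hd hcd hge
    have hIc : Icc c d ⊆ Icc a b := hsub c hc d hd
    exact vdc1pos hcd hδ (g := g) (g' := g')
      (fun x hx => (hφ x (hIc hx)).mono hIc)
      (fun x hx => (hg x (hIc hx)).mono hIc)
      (hg'c.mono hIc)
      (fun x hx => (ht.trans_le (hg't x (hIc hx))).le)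
      hge
  have vneg : ∀ c ∈ Icc a b, ∀ d ∈ Icc a b, c ≤ d → (∀ x ∈ Icc c d, g x ≤ -δ) →
      ‖∫ z in c..d, E z‖ ≤ 2 / δ := by
    intro c hc d hd hcd hge
    have hIc : Icc c d ⊆ Icc a b := hsub c hc d hd
    exact vdc1neg hcd hδ (g := g) (g' := g')
      (fun x hx => (hφ x (hIc hx)).mono hIc)
      (fun x hx => (hg x (hIc hx)).mono hIc)
      (hg'c.mono hIc)
      (fun x hx => (ht.trans_le (hg't x (hIc hx))).le)
      hge
  have htriv : (2 : ℝ) / δ ≤ 6 * (1 / δ) := by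
    rw [div_le_iff₀ hδ]
    field_simp
    linarith [hδ]
  by_cases hca0 : δ ≤ g a
  · -- g ≥ δ everywhere
    refine le_trans (vpos a (left_mem_Icc.2 hab) b (right_mem_Icc.2 hab) hab ?_) htriv
    exact fun x hx => le_trans hca0 (hmono (left_mem_Icc.2 hab) hx hx.1)
  by_cases hcb0 : g b ≤ -δ
  · -- g ≤ -δ everywhere
    refine le_trans (vneg a (left_mem_Icc.2 hab) b (right_mem_Icc.2 hab) hab ?_) htriv
    exact fun x hx => le_trans (hmono hx (right_mem_Icc.2 hab) hx.2) hcb0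
  push_neg at hca0 hcb0
  -- middle case: find c and d
  obtain ⟨c, hcI, hgc, hbd1⟩ :
      ∃ c, c ∈ Icc a b ∧ -δ ≤ g c ∧ (c = a ∨ (g c = -δ ∧ ‖∫ z in a..c, E z‖ ≤ 2 / δ)) := by
    by_cases hca : -δ ≤ g a
    · exact ⟨a, left_mem_Icc.2 hab, hca, Or.inl rfl⟩
    · push_neg at hca
      obtain ⟨c, hcI, hgc⟩ := intermediate_value_Icc hab gcont ⟨hca.le, hcb0.le⟩
      refine ⟨c, hcI, hgc.ge, Or.inr ⟨hgc, ?_⟩⟩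
      refine vneg a (left_mem_Icc.2 hab) c hcI hcI.1 ?_
      intro x hx
      have := hmono (hsub a (left_mem_Icc.2 hab) c hcI hx) hcI hx.2
      linarith
  obtain ⟨d, hdI, hgd, hbd2⟩ :
      ∃ d, d ∈ Icc a b ∧ g d ≤ δ ∧ (d = b ∨ (g d = δ ∧ ‖∫ z in d..b, E z‖ ≤ 2 / δ)) := by
    by_cases hdb : g b ≤ δ
    · exact ⟨b, right_mem_Icc.2 hab, hdb, Or.inl rfl⟩
    · push_neg at hdb
      obtain ⟨d, hdI, hgd⟩ := intermediate_value_Icc hab gcont ⟨hca0.le, hdb.le⟩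
      refine ⟨d, hdI, hgd.le, Or.inr ⟨hgd, ?_⟩⟩
      refine vpos d hdI b (right_mem_Icc.2 hab) hdI.2 ?_
      intro x hx
      have := hmono hdI (hsub d hdI b (right_mem_Icc.2 hab) hx) hx.1
      linarith
  -- c ≤ d
  have hcd : c ≤ d := by
    rcases hbd1 with rfl | ⟨hgc', _⟩
    · exact hdI.1
    rcases hbd2 with rfl | ⟨hgd', _⟩
    · exact hcI.2
    by_contra hlt
    push_neg at hlt
    have := hmono hdI hcI hlt.le
    rw [hgc', hgd'] at this
    linarith
  -- bound on the left piece
  have h1 : ‖∫ z in a..c, E z‖ ≤ 2 / δ := by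
    rcases hbd1 with rfl | ⟨_, hb⟩
    · simp [integral_same]; positivity
    · exact hb
  have h3 : ‖∫ z in d..b, E z‖ ≤ 2 / δ := by
    rcases hbd2 with rfl | ⟨_, hb⟩
    · simp [integral_same]; positivity
    · exact hb
  -- middle piece
  have h2 : ‖∫ z in c..d, E z‖ ≤ 2 * δ / t := by
    have hlen : t * (d - c) ≤ 2 * δ := by
      have := hgrow c hcI d hdI hcd
      linarith
    calc ‖∫ z in c..d, E z‖ ≤ ∫ z in c..d, ‖E z‖ := norm_integral_le_integral_norm hcd
      _ = ∫ z in c..d, (1 : ℝ) := by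
          apply integral_congr
          intro x _
          exact norm_expI (φ x)
      _ = d - c := by simp
      _ ≤ 2 * δ / t := by
          rw [le_div_iff₀ ht]
          linarith
  -- assemble
  have hsplit : ∫ z in a..b, E z = (∫ z in a..c, E z) + (∫ z in c..d, E z) + (∫ z in d..b, E z) := by
    rw [integral_add_adjacent_intervals (Eint a (left_mem_Icc.2 hab) c hcI) (Eint c hcI d hdI),
      integral_add_adjacent_intervals (Eint a (left_mem_Icc.2 hab) d hdI)
        (Eint d hdI b (right_mem_Icc.2 hab))]
  have e2 : 2 * δ / t = 2 / δ := by
    rw [← hδδ]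
    field_simp
  calc ‖∫ z in a..b, E z‖
      ≤ ‖∫ z in a..c, E z‖ + ‖∫ z in c..d, E z‖ + ‖∫ z in d..b, E z‖ := by
        rw [hsplit]
        exact norm_add₃_le
    _ ≤ 2 / δ + 2 * δ / t + 2 / δ := by gcongr
    _ = 6 * (1 / δ) := by rw [e2]; ring

private lemma intervalIntegral_conj {f : ℝ → ℂ} {a b : ℝ} :
    ∫ x in a..b, (starRingEnd ℂ) (f x) = (starRingEnd ℂ) (∫ x in a..b, f x) := by
  rw [intervalIntegral, intervalIntegral, integral_conj, integral_conj, map_sub]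

/-- Second-derivative van der Corput, either sign. -/
private lemma vdc2 {a b t : ℝ} {φ g g' : ℝ → ℝ}
    (hab : a ≤ b) (ht : 0 < t)
    (hφ : ∀ x ∈ Icc a b, HasDerivWithinAt φ (g x) (Icc a b) x)
    (hg : ∀ x ∈ Icc a b, HasDerivWithinAt g (g' x) (Icc a b) x)
    (hg'c : ContinuousOn g' (Icc a b))
    (hg't : (∀ x ∈ Icc a b, t ≤ g' x) ∨ (∀ x ∈ Icc a b, g' x ≤ -t)) :
    ‖∫ z in a..b, Complex.exp (Complex.I * φ z)‖ ≤ 6 * t ^ (-(1 / 2) : ℝ) := by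
  rcases hg't with h | h
  · exact vdc2pos hab ht hφ hg hg'c h
  · have key : ∫ z in a..b, Complex.exp (Complex.I * φ z)
        = (starRingEnd ℂ) (∫ z in a..b, Complex.exp (Complex.I * (-φ z : ℝ))) := by
      rw [← intervalIntegral_conj]
      apply integral_congr
      intro x _
      show Complex.exp (Complex.I * (φ x : ℝ)) = (starRingEnd ℂ) (Complex.exp (Complex.I * ((-φ x : ℝ) : ℂ)))
      rw [← Complex.exp_conj]
      congr 1
      simp [map_mul, Complex.conj_I, Complex.conj_ofReal]
    rw [key, RCLike.norm_conj]
    exact vdc2pos hab ht (φ := fun z => -φ z) (g := fun z => -g z) (g' := fun z => -g' z)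
      (fun x hx => (hφ x hx).neg) (fun x hx => (hg x hx).neg) hg'c.neg
      (fun x hx => by show t ≤ -g' x; linarith [h x hx])

/-- Amplitude version. -/
private lemma vdcAmp {a b t : ℝ} {φ g g' : ℝ → ℝ} {ψ ψ' : ℝ → ℂ}
    (hab : a ≤ b) (ht : 0 < t)
    (hφ : ∀ x ∈ Icc a b, HasDerivWithinAt φ (g x) (Icc a b) x)
    (hg : ∀ x ∈ Icc a b, HasDerivWithinAt g (g' x) (Icc a b) x)
    (hg'c : ContinuousOn g' (Icc a b))
    (hg't : (∀ x ∈ Icc a b, t ≤ g' x) ∨ (∀ x ∈ Icc a b, g' x ≤ -t))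
    (hψ : ∀ x ∈ Icc a b, HasDerivWithinAt ψ (ψ' x) (Icc a b) x)
    (hψ'c : ContinuousOn ψ' (Icc a b)) :
    ‖∫ z in a..b, Complex.exp (Complex.I * φ z) * ψ z‖ ≤
      6 * t ^ (-(1 / 2) : ℝ) * (‖ψ b‖ + ∫ z in a..b, ‖ψ' z‖) := by
  set M := 6 * t ^ (-(1 / 2) : ℝ) with hM
  have hM0 : 0 ≤ M := by positivity
  have φcont : ContinuousOn φ (Icc a b) := fun x hx => (hφ x hx).continuousWithinAt
  have ψcont : ContinuousOn ψ (Icc a b) := fun x hx => (hψ x hx).continuousWithinAt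
  set E : ℝ → ℂ := fun x => Complex.exp (Complex.I * φ x) with hE
  have Econt : ContinuousOn E (Icc a b) :=
    Complex.continuous_exp.comp_continuousOn
      ((continuous_const.continuousOn).mul (Complex.continuous_ofReal.comp_continuousOn φcont))
  have Eint : ∀ c ∈ Icc a b, ∀ d ∈ Icc a b, IntervalIntegrable E volume c d :=
    fun c hc d hd => (Econt.mono (uIcc_subset_Icc hc hd)).intervalIntegrable
  set F : ℝ → ℂ := fun x => ∫ z in a..x, E z with hF
  have hFbound : ∀ x ∈ Icc a b, ‖F x‖ ≤ M := by
    intro x hx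
    have hIc : Icc a x ⊆ Icc a b := Icc_subset_Icc le_rfl hx.2
    exact vdc2 hx.1 ht (g := g) (g' := g')
      (fun y hy => (hφ y (hIc hy)).mono hIc)
      (fun y hy => (hg y (hIc hy)).mono hIc)
      (hg'c.mono hIc)
      (hg't.imp (fun h y hy => h y (hIc hy)) (fun h y hy => h y (hIc hy)))
  have Fcont : ContinuousOn F (Icc a b) := by
    have hInt : IntegrableOn E (uIcc a b) volume := by
      rw [uIcc_of_le hab]
      exact Econt.integrableOn_compact isCompact_Icc
    have := continuousOn_primitive_interval (μ := volume) (f := E) (a := a) (b := b) hInt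
    rwa [uIcc_of_le hab] at this
  have hFder : ∀ x ∈ Ioo a b, HasDerivAt F (E x) x := by
    intro x hx
    apply intervalIntegral.integral_hasDerivAt_right (Eint a (left_mem_Icc.2 hab) x
      (Ioo_subset_Icc_self hx))
    · exact ⟨Ioo a b, Ioo_mem_nhds hx.1 hx.2,
        ((Econt.mono Ioo_subset_Icc_self).aestronglyMeasurable measurableSet_Ioo)⟩
    · exact (Econt x (Ioo_subset_Icc_self hx)).continuousAt (Icc_mem_nhds hx.1 hx.2)
  have hGint1 : IntervalIntegrable (fun z => E z * ψ z) volume a b := by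
    apply ContinuousOn.intervalIntegrable
    rw [uIcc_of_le hab]
    exact Econt.mul ψcont
  have hGint2 : IntervalIntegrable (fun z => F z * ψ' z) volume a b := by
    apply ContinuousOn.intervalIntegrable
    rw [uIcc_of_le hab]
    exact Fcont.mul hψ'c
  have ftc : ∫ z in a..b, (E z * ψ z + F z * ψ' z) = F b * ψ b - F a * ψ a := by
    apply integral_eq_sub_of_hasDeriv_right_of_le hab (Fcont.mul ψcont)
    · intro x hx
      have h1 : HasDerivAt F (E x) x := hFder x hx
      have h2 : HasDerivAt ψ (ψ' x) x :=
        (hψ x (Ioo_subset_Icc_self hx)).hasDerivAt (Icc_mem_nhds hx.1 hx.2)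
      exact (h1.mul h2).hasDerivWithinAt
    · exact hGint1.add hGint2
  have hFa : F a = 0 := integral_same
  have key : ∫ z in a..b, E z * ψ z = F b * ψ b - ∫ z in a..b, F z * ψ' z := by
    rw [hFa, zero_mul, sub_zero] at ftc
    rw [← ftc, integral_add hGint1 hGint2]
    ring
  have hnormint : ∫ z in a..b, ‖F z * ψ' z‖ ≤ M * ∫ z in a..b, ‖ψ' z‖ := by
    rw [← intervalIntegral.integral_const_mul]
    apply integral_mono_on hab
    · apply ContinuousOn.intervalIntegrable
      rw [uIcc_of_le hab]
      exact (Fcont.mul hψ'c).norm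
    · apply ContinuousOn.intervalIntegrable
      rw [uIcc_of_le hab]
      exact continuousOn_const.mul hψ'c.norm
    · intro x hx
      rw [norm_mul]
      exact mul_le_mul_of_nonneg_right (hFbound x hx) (norm_nonneg _)
  calc ‖∫ z in a..b, E z * ψ z‖
      ≤ ‖F b * ψ b‖ + ‖∫ z in a..b, F z * ψ' z‖ := by rw [key]; exact norm_sub_le _ _
    _ ≤ M * ‖ψ b‖ + ∫ z in a..b, ‖F z * ψ' z‖ := by
        gcongr
        · rw [norm_mul]
          exact mul_le_mul_of_nonneg_right (hFbound b (right_mem_Icc.2 hab)) (norm_nonneg _)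
        · exact norm_integral_le_integral_norm hab
    _ ≤ M * ‖ψ b‖ + M * ∫ z in a..b, ‖ψ' z‖ := by gcongr
    _ = M * (‖ψ b‖ + ∫ z in a..b, ‖ψ' z‖) := by ring

end VdC

theorem stmt_11 : ∃ C : ℝ, 0 < C ∧ ∀ (a b t : ℝ) (φ : ℝ → ℝ) (ψ : ℝ → ℂ),
    a ≤ b → 0 < t →
    ContDiffOn ℝ 2 φ (Set.Icc a b) →
    (∀ z ∈ Set.Icc a b, t ≤ |iteratedDerivWithin 2 φ (Set.Icc a b) z|) →
    ContDiffOn ℝ 1 ψ (Set.Icc a b) →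
    ‖∫ z in a..b, Complex.exp (Complex.I * (φ z : ℂ)) * ψ z‖ ≤
      C * t ^ (-(1 / 2 : ℝ)) *
        (‖ψ b‖ + ∫ z in a..b, ‖derivWithin ψ (Set.Icc a b) z‖) := by
  refine ⟨6, by norm_num, ?_⟩
  intro a b t φ ψ hab ht hφC hφ'' hψC
  rcases eq_or_lt_of_le hab with rfl | hab'
  · simp
    positivity
  have hu : UniqueDiffOn ℝ (Icc a b) := uniqueDiffOn_Icc hab'
  set g : ℝ → ℝ := derivWithin φ (Icc a b) with hgdef
  set g' : ℝ → ℝ := derivWithin g (Icc a b) with hg'def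
  have hφd : DifferentiableOn ℝ φ (Icc a b) := hφC.differentiableOn (by norm_num)
  have hφh : ∀ x ∈ Icc a b, HasDerivWithinAt φ (g x) (Icc a b) x :=
    fun x hx => (hφd x hx).hasDerivWithinAt
  have hgC : ContDiffOn ℝ 1 g (Icc a b) := hφC.derivWithin hu (by norm_num)
  have hgh : ∀ x ∈ Icc a b, HasDerivWithinAt g (g' x) (Icc a b) x :=
    fun x hx => ((hgC.differentiableOn (by norm_num)) x hx).hasDerivWithinAt
  have hg'c : ContinuousOn g' (Icc a b) := hgC.continuousOn_derivWithin hu le_rfl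
  have hiter : ∀ x ∈ Icc a b, iteratedDerivWithin 2 φ (Icc a b) x = g' x := by
    intro x hx
    have h2 : iteratedDerivWithin 2 φ (Icc a b) x
        = derivWithin (iteratedDerivWithin 1 φ (Icc a b)) (Icc a b) x :=
      congrFun iteratedDerivWithin_succ x
    rw [h2]
    apply derivWithin_congr
    · intro y hy
      exact congrFun iteratedDerivWithin_one y
    · exact congrFun iteratedDerivWithin_one x
  have habs : ∀ x ∈ Icc a b, t ≤ |g' x| := fun x hx => (hiter x hx) ▸ hφ'' x hx
  have hdich : ∀ x ∈ Icc a b, t ≤ g' x ∨ g' x ≤ -t := by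
    intro x hx
    rcases le_abs.mp (habs x hx) with h | h
    · exact Or.inl h
    · exact Or.inr (by linarith)
  have hsign : (∀ x ∈ Icc a b, t ≤ g' x) ∨ (∀ x ∈ Icc a b, g' x ≤ -t) := by
    rcases hdich a (left_mem_Icc.2 hab) with ha | ha
    · left
      intro x hx
      rcases hdich x hx with h | h
      · exact h
      · exfalso
        obtain ⟨z, hz, hz0⟩ := intermediate_value_Icc' hx.1
          (hg'c.mono (Icc_subset_Icc le_rfl hx.2)) (by constructor <;> linarith : (0:ℝ) ∈ Icc (g' x) (g' a))
        have := habs z (Icc_subset_Icc le_rfl hx.2 hz)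
        rw [hz0] at this
        simp at this
        linarith
    · right
      intro x hx
      rcases hdich x hx with h | h
      · exfalso
        obtain ⟨z, hz, hz0⟩ := intermediate_value_Icc hx.1
          (hg'c.mono (Icc_subset_Icc le_rfl hx.2)) (by constructor <;> linarith : (0:ℝ) ∈ Icc (g' a) (g' x))
        have := habs z (Icc_subset_Icc le_rfl hx.2 hz)
        rw [hz0] at this
        simp at this
        linarith
      · exact h
  have hψd : DifferentiableOn ℝ ψ (Icc a b) := hψC.differentiableOn (by norm_num)
  have hψh : ∀ x ∈ Icc a b, HasDerivWithinAt ψ (derivWithin ψ (Icc a b) x) (Icc a b) x :=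
    fun x hx => (hψd x hx).hasDerivWithinAt
  have hψ'c : ContinuousOn (derivWithin ψ (Icc a b)) (Icc a b) :=
    hψC.continuousOn_derivWithin hu le_rfl
  exact vdcAmp hab ht hφh hgh hg'c hsign hψh hψ'c
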